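/- Let U and U' be real d×k matrices, and suppose every row uⁱ of U is nonzero. Define weights pⁱ = 1/(2‖uⁱ‖₂) for i = 1,…,d. If Σᵢ pⁱ·‖u'ⁱ‖₂² ≤ Σᵢ pⁱ·‖uⁱ‖₂², then Σᵢ ‖u'ⁱ‖₂ ≤ Σᵢ ‖uⁱ‖₂, i.e. ‖U'‖_{2,1} ≤ ‖U‖_{2,1}. -/

import Mathlib

lemma key_aux (a b : ℝ) (ha : 0 < a) (hb : 0 ≤ b) :
    Real.sqrt b ≤ 1 / (2 * Real.sqrt a) * b + Real.sqrt a / 2 := by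
  have hsa : 0 < Real.sqrt a := Real.sqrt_pos.mpr ha
  have h1 : 0 ≤ (Real.sqrt b - Real.sqrt a) ^ 2 := sq_nonneg _
  have hb2 : Real.sqrt b ^ 2 = b := Real.sq_sqrt hb
  have ha2 : Real.sqrt a ^ 2 = a := Real.sq_sqrt ha.le
  have h2 : 2 * Real.sqrt a * Real.sqrt b ≤ b + a := by nlinarith
  rw [show (1 / (2 * Real.sqrt a) * b + Real.sqrt a / 2) = (b + a) / (2 * Real.sqrt a) from by
    field_simp; nlinarith, le_div_iff₀ (by positivity)]
  nlinarith

theorem l21_norm_decrease (d k : ℕ) (U U' : Matrix (Fin d) (Fin k) ℝ)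
    (hrows : ∀ i, U i ≠ 0)
    (h : ∑ i, (1 / (2 * Real.sqrt (∑ j, U i j ^ 2))) * (∑ j, U' i j ^ 2) ≤
         ∑ i, (1 / (2 * Real.sqrt (∑ j, U i j ^ 2))) * (∑ j, U i j ^ 2)) :
    ∑ i, Real.sqrt (∑ j, U' i j ^ 2) ≤ ∑ i, Real.sqrt (∑ j, U i j ^ 2) := by
  have hpos : ∀ i, 0 < ∑ j, U i j ^ 2 := by
    intro i
    have : ∃ j, U i j ≠ 0 := by
      by_contra hc
      push_neg at hc
      exact hrows i (funext hc)
    obtain ⟨j, hj⟩ := this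
    exact Finset.sum_pos' (fun j _ => sq_nonneg _) ⟨j, Finset.mem_univ j, by positivity⟩
  have step1 : ∀ i : Fin d, Real.sqrt (∑ j, U' i j ^ 2) ≤
      1 / (2 * Real.sqrt (∑ j, U i j ^ 2)) * (∑ j, U' i j ^ 2)
        + Real.sqrt (∑ j, U i j ^ 2) / 2 := fun i =>
    key_aux _ _ (hpos i) (Finset.sum_nonneg fun j _ => sq_nonneg _)
  have step2 : ∀ i : Fin d, 1 / (2 * Real.sqrt (∑ j, U i j ^ 2)) * (∑ j, U i j ^ 2)
      = Real.sqrt (∑ j, U i j ^ 2) / 2 := by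
    intro i
    set s := Real.sqrt (∑ j, U i j ^ 2) with hs
    have hsa : 0 < s := Real.sqrt_pos.mpr (hpos i)
    have hA : (∑ j, U i j ^ 2) = s * s := by
      rw [hs, Real.mul_self_sqrt (hpos i).le]
    rw [hA]; field_simp
  calc ∑ i, Real.sqrt (∑ j, U' i j ^ 2)
      ≤ ∑ i, (1 / (2 * Real.sqrt (∑ j, U i j ^ 2)) * (∑ j, U' i j ^ 2)
          + Real.sqrt (∑ j, U i j ^ 2) / 2) :=
        Finset.sum_le_sum fun i _ => step1 i
    _ = (∑ i, 1 / (2 * Real.sqrt (∑ j, U i j ^ 2)) * (∑ j, U' i j ^ 2))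
          + ∑ i, Real.sqrt (∑ j, U i j ^ 2) / 2 := Finset.sum_add_distrib
    _ ≤ (∑ i, 1 / (2 * Real.sqrt (∑ j, U i j ^ 2)) * (∑ j, U i j ^ 2))
          + ∑ i, Real.sqrt (∑ j, U i j ^ 2) / 2 := by linarith
    _ = (∑ i, Real.sqrt (∑ j, U i j ^ 2) / 2)
          + ∑ i, Real.sqrt (∑ j, U i j ^ 2) / 2 := by
        congr 1; exact Finset.sum_congr rfl fun i _ => step2 i
    _ = ∑ i, Real.sqrt (∑ j, U i j ^ 2) := by
        rw [← Finset.sum_add_distrib]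
        exact Finset.sum_congr rfl fun i _ => by ring
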